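/- Let N_A, N_B be positive integers with N_B ≥ 2, let H_A = (ℂ²)^{⊗N_A} and H_B = (ℂ²)^{⊗N_B}, and let |Ψ⟩ be a unit vector in H_A ⊗ H_B. With the GME-concurrence C_GME as seed measure, L^C(|Ψ⟩) ≤ L_global^C(|Ψ⟩) ≤ min over nonempty proper subsets γ of the qubits of H_B of √(2(1 − tr(Ψ_γ²))), where Ψ_γ is the reduced density matrix of |Ψ⟩⟨Ψ| on the qubits in γ. -/

import Mathlib

open scoped BigOperators ComplexConjugate ComplexOrder

noncomputable section

namespace QIpaper

/-- Inner product `⟨ψ|φ⟩`, conjugate-linear in the first argument. -/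
def braket {I : Type*} [Fintype I] (ψ φ : I → ℂ) : ℂ := ∑ x, conj (ψ x) * φ x

/-- Outer product `|ψ⟩⟨ψ|`. -/
def dm {I : Type*} (ψ : I → ℂ) : Matrix I I ℂ := Matrix.of fun x y => ψ x * conj (ψ y)

open Classical in
/-- Positive semidefinite square root (junk value `0` on non-PSD matrices). -/
def psdSqrt {I : Type*} [Fintype I] [DecidableEq I] (A : Matrix I I ℂ) : Matrix I I ℂ :=
  if h : A.PosSemidef then
    h.1.eigenvectorUnitary.1 * Matrix.diagonal ((↑) ∘ (√·) ∘ h.1.eigenvalues) *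
      (star h.1.eigenvectorUnitary : Matrix I I ℂ)
  else 0

/-- The trace norm `‖A‖₁ = tr √(AᴴA)`. -/
def traceNorm {I : Type*} [Fintype I] [DecidableEq I] (A : Matrix I I ℂ) : ℝ :=
  (psdSqrt (A.conjTranspose * A)).trace.re

/-- Fidelity `F(ρ,σ) = tr √(√ρ σ √ρ)`. -/
def fidelity {I : Type*} [Fintype I] [DecidableEq I] (ρ σ : Matrix I I ℂ) : ℝ :=
  (psdSqrt (psdSqrt ρ * σ * psdSqrt ρ)).trace.re

/-- Purity `tr(ρ²)`. -/
def purity {I : Type*} [Fintype I] (ρ : Matrix I I ℂ) : ℝ := ((ρ * ρ).trace).re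

def sigmaX : Matrix (Fin 2) (Fin 2) ℂ := !![0, 1; 1, 0]
def sigmaY : Matrix (Fin 2) (Fin 2) ℂ := !![0, -Complex.I; Complex.I, 0]
def sigmaZ : Matrix (Fin 2) (Fin 2) ℂ := !![1, 0; 0, -1]

/-- `σ_y^{⊗I}` on the qubits indexed by `I`. -/
def sigmaYn {I : Type*} [Fintype I] [DecidableEq I] : Matrix (I → Fin 2) (I → Fin 2) ℂ :=
  Matrix.of fun x y => ∏ k, sigmaY (x k) (y k)

/-- The `n`-tangle `τ(ψ) = |⟨ψ|σ_y^{⊗n}|ψ*⟩|`. -/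
def tangle {I : Type*} [Fintype I] [DecidableEq I] (ψ : (I → Fin 2) → ℂ) : ℝ :=
  ‖∑ x, ∑ y, conj (ψ x) * sigmaYn x y * conj (ψ y)‖

/-- Entrywise complex conjugate of a matrix. -/
def conjM {I J : Type*} (ρ : Matrix I J ℂ) : Matrix I J ℂ := Matrix.of fun x y => conj (ρ x y)

/-- `ρ̃ = σ_y^{⊗n} ρ* σ_y^{⊗n}`. -/
def tildeM {I : Type*} [Fintype I] [DecidableEq I] (ρ : Matrix (I → Fin 2) (I → Fin 2) ℂ) :
    Matrix (I → Fin 2) (I → Fin 2) ℂ := sigmaYn * conjM ρ * sigmaYn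

/-- The Wootters tilde `|ψ̃⟩ = σ_y^{⊗n}|ψ*⟩`. -/
def wtilde {I : Type*} [Fintype I] [DecidableEq I] (ψ : (I → Fin 2) → ℂ) : (I → Fin 2) → ℂ :=
  sigmaYn.mulVec (fun x => conj (ψ x))

/-- Reduced density matrix of the pure state `ψ` on the qubits in `s`
(tracing out the complement). -/
def reduced {n : ℕ} (s : Finset (Fin n)) (ψ : (Fin n → Fin 2) → ℂ) :
    Matrix ({i : Fin n // i ∈ s} → Fin 2) ({i : Fin n // i ∈ s} → Fin 2) ℂ :=
  Matrix.of fun a b => ∑ c : {i : Fin n // i ∉ s} → Fin 2,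
    ψ (fun i => if h : i ∈ s then a ⟨i, h⟩ else c ⟨i, h⟩) *
    conj (ψ (fun i => if h : i ∈ s then b ⟨i, h⟩ else c ⟨i, h⟩))

/-- GME-concurrence `C_GME(ψ) = min_{∅ ⊊ γ ⊊ [n]} √(2(1 − tr ψ_γ²))`. -/
def gme {n : ℕ} (ψ : (Fin n → Fin 2) → ℂ) : ℝ :=
  sInf {r : ℝ | ∃ γ : Finset (Fin n), γ ≠ ∅ ∧ γ ≠ Finset.univ ∧
    r = Real.sqrt (2 * (1 - purity (reduced γ ψ)))}

/-- Concentratable entanglement `C(ψ; s) = 1 − 2^{−|s|} Σ_{γ⊆s} tr(ψ_γ²)`. -/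
def CE {n : ℕ} (ψ : (Fin n → Fin 2) → ℂ) (s : Finset (Fin n)) : ℝ :=
  1 - (1 / 2 ^ s.card) * ∑ γ ∈ s.powerset, purity (reduced γ ψ)

/-- The subnormalized post-measurement vector `(⟨v|⊗I)|Ψ⟩`. -/
def contract {IA IB : Type*} [Fintype IA] (v : IA → ℂ) (Ψ : IA × IB → ℂ) : IB → ℂ :=
  fun y => ∑ x, conj (v x) * Ψ (x, y)

/-- Probability `p_v = ⟨Ψ|(|v⟩⟨v| ⊗ I)|Ψ⟩` of outcome `v`. -/
def prob {IA IB : Type*} [Fintype IA] [Fintype IB] (v : IA → ℂ) (Ψ : IA × IB → ℂ) : ℝ :=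
  (braket (contract v Ψ) (contract v Ψ)).re

/-- Normalized post-measurement state (the zero vector when the probability vanishes). -/
def postState {IA IB : Type*} [Fintype IA] [Fintype IB] (v : IA → ℂ) (Ψ : IA × IB → ℂ) :
    IB → ℂ := fun y => ((Real.sqrt (prob v Ψ) : ℂ))⁻¹ * contract v Ψ y

/-- `b` is an orthonormal family. (An orthonormal family indexed by the space's own
index type is an orthonormal basis.) -/
def ONB {J I : Type*} [Fintype I] [DecidableEq J] (b : J → I → ℂ) : Prop :=
  ∀ i j, braket (b i) (b j) = if i = j then 1 else 0

/-- Average post-measurement entanglement `Ē_β(Ψ) = Σ_i p_i E(φ_i)`. -/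
def avgE {ι IA IB : Type*} [Fintype ι] [Fintype IA] [Fintype IB]
    (E : (IB → ℂ) → ℝ) (b : ι → IA → ℂ) (Ψ : IA × IB → ℂ) : ℝ :=
  ∑ i, prob (b i) Ψ * E (postState (b i) Ψ)

/-- Multipartite entanglement of assistance: supremum of `Ē_β` over all
orthonormal bases `β` of `H_A`. -/
def Lglobal {IA IB : Type*} [Fintype IA] [Fintype IB] [DecidableEq IA]
    (E : (IB → ℂ) → ℝ) (Ψ : IA × IB → ℂ) : ℝ :=
  sSup {r : ℝ | ∃ b : IA → IA → ℂ, ONB b ∧ r = avgE E b Ψ}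

/-- Tensor-product basis of `(ℂ²)^{⊗K}` built from single-qubit bases. -/
def productBasis {K : Type*} [Fintype K] (q : K → Fin 2 → Fin 2 → ℂ) :
    (K → Fin 2) → (K → Fin 2) → ℂ :=
  fun i x => ∏ k, q k (i k) (x k)

/-- Localizable multipartite entanglement: supremum of `Ē_β` over product bases of
single-qubit orthonormal bases of `H_A = (ℂ²)^{⊗K}`. -/
def Lloc {K IB : Type*} [Fintype K] [DecidableEq K] [Fintype IB]
    (E : (IB → ℂ) → ℝ) (Ψ : (K → Fin 2) × IB → ℂ) : ℝ :=
  sSup {r : ℝ | ∃ q : K → Fin 2 → Fin 2 → ℂ, (∀ k, ONB (q k)) ∧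
    r = avgE E (productBasis q) Ψ}

/-- Partial trace over the `A` system of `|Ψ⟩⟨Ψ|`. -/
def ptraceA {IA IB : Type*} [Fintype IA] (Ψ : IA × IB → ℂ) : Matrix IB IB ℂ :=
  Matrix.of fun y y' => ∑ x, Ψ (x, y) * conj (Ψ (x, y'))

/-- Reduced density matrix of `|Ψ⟩⟨Ψ|` on the subset `s` of the `B` qubits. -/
def reducedB {IA : Type*} [Fintype IA] {n : ℕ} (s : Finset (Fin n))
    (Ψ : IA × (Fin n → Fin 2) → ℂ) :
    Matrix ({i : Fin n // i ∈ s} → Fin 2) ({i : Fin n // i ∈ s} → Fin 2) ℂ :=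
  Matrix.of fun a b => ∑ x : IA, ∑ c : {i : Fin n // i ∉ s} → Fin 2,
    Ψ (x, fun i => if h : i ∈ s then a ⟨i, h⟩ else c ⟨i, h⟩) *
    conj (Ψ (x, fun i => if h : i ∈ s then b ⟨i, h⟩ else c ⟨i, h⟩))

section Aux

open Finset
open scoped Matrix

variable {I IB : Type*} [Fintype I] [Fintype IB]

lemma braket_self_re (ψ : I → ℂ) : (braket ψ ψ).re = ∑ x, Complex.normSq (ψ x) := by
  unfold braket
  rw [Complex.re_sum]
  refine Finset.sum_congr rfl fun x _ => ?_
  rw [mul_comm, Complex.mul_conj, Complex.ofReal_re]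

lemma prob_eq (v : I → ℂ) (Ψ : I × IB → ℂ) :
    prob v Ψ = ∑ y, Complex.normSq (contract v Ψ y) := braket_self_re _

lemma prob_nonneg (v : I → ℂ) (Ψ : I × IB → ℂ) : 0 ≤ prob v Ψ := by
  rw [prob_eq]
  exact Finset.sum_nonneg fun y _ => Complex.normSq_nonneg _

lemma contract_eq_zero {v : I → ℂ} {Ψ : I × IB → ℂ} (h : prob v Ψ = 0) :
    ∀ y, contract v Ψ y = 0 := by
  rw [prob_eq] at h
  intro y
  have := (Finset.sum_eq_zero_iff_of_nonneg
    (fun y _ => Complex.normSq_nonneg (contract v Ψ y))).mp h y (Finset.mem_univ y)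
  exact Complex.normSq_eq_zero.mp this

lemma reduced_conj {n : ℕ} (γ : Finset (Fin n)) (ψ : (Fin n → Fin 2) → ℂ)
    (a b : {i : Fin n // i ∈ γ} → Fin 2) :
    reduced γ ψ b a = conj (reduced γ ψ a b) := by
  simp only [reduced, Matrix.of_apply, map_sum, _root_.map_mul, Complex.conj_conj]
  exact Finset.sum_congr rfl fun c _ => (mul_comm _ _)

lemma purity_of_conj (ρ : Matrix I I ℂ) (h : ∀ a b, ρ b a = conj (ρ a b)) :
    purity ρ = ∑ a, ∑ b, Complex.normSq (ρ a b) := by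
  unfold purity
  simp only [Matrix.trace, Matrix.diag, Matrix.mul_apply, Complex.re_sum]
  refine Finset.sum_congr rfl fun a _ => ?_
  refine Finset.sum_congr rfl fun b _ => ?_
  rw [h a b, Complex.mul_conj, Complex.ofReal_re]

lemma purity_reduced {n : ℕ} (γ : Finset (Fin n)) (ψ : (Fin n → Fin 2) → ℂ) :
    purity (reduced γ ψ) = ∑ a, ∑ b, Complex.normSq (reduced γ ψ a b) :=
  purity_of_conj _ (reduced_conj γ ψ)

lemma purity_reduced_nonneg {n : ℕ} (γ : Finset (Fin n)) (ψ : (Fin n → Fin 2) → ℂ) :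
    0 ≤ purity (reduced γ ψ) := by
  rw [purity_reduced]
  exact Finset.sum_nonneg fun a _ => Finset.sum_nonneg fun b _ => Complex.normSq_nonneg _

lemma gme_bddBelow {n : ℕ} (ψ : (Fin n → Fin 2) → ℂ) :
    ∀ r ∈ {r : ℝ | ∃ γ : Finset (Fin n), γ ≠ ∅ ∧ γ ≠ Finset.univ ∧
      r = Real.sqrt (2 * (1 - purity (reduced γ ψ)))}, 0 ≤ r := by
  rintro r ⟨γ, -, -, rfl⟩
  exact Real.sqrt_nonneg _

lemma gme_nonneg {n : ℕ} (ψ : (Fin n → Fin 2) → ℂ) : 0 ≤ gme ψ :=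
  Real.sInf_nonneg (gme_bddBelow ψ)

lemma gme_le_sqrt {n : ℕ} {γ : Finset (Fin n)} (h1 : γ ≠ ∅) (h2 : γ ≠ Finset.univ)
    (ψ : (Fin n → Fin 2) → ℂ) :
    gme ψ ≤ Real.sqrt (2 * (1 - purity (reduced γ ψ))) :=
  csInf_le ⟨0, gme_bddBelow ψ⟩ ⟨γ, h1, h2, rfl⟩

lemma gme_le_sqrt_two {n : ℕ} (hn : 2 ≤ n) (ψ : (Fin n → Fin 2) → ℂ) :
    gme ψ ≤ Real.sqrt 2 := by
  have h0 : (⟨0, by omega⟩ : Fin n) ≠ ⟨1, by omega⟩ := by simp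
  set γ : Finset (Fin n) := {⟨0, by omega⟩} with hγ
  have h1 : γ ≠ ∅ := by simp [hγ]
  have h2 : γ ≠ Finset.univ := by
    intro h
    have : (⟨1, by omega⟩ : Fin n) ∈ γ := h ▸ Finset.mem_univ _
    rw [hγ, Finset.mem_singleton] at this
    exact h0 this.symm
  refine (gme_le_sqrt h1 h2 ψ).trans (Real.sqrt_le_sqrt ?_)
  nlinarith [purity_reduced_nonneg γ ψ]

lemma onb_complete [DecidableEq I] {b : I → I → ℂ} (hb : ONB b) :
    (Matrix.of fun i x => conj (b i x))ᴴ * (Matrix.of fun i x => conj (b i x)) = 1 := by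
  apply mul_eq_one_comm.mp
  ext i j
  simpa [Matrix.mul_apply, Matrix.conjTranspose_apply, braket, Matrix.one_apply]
    using hb i j

lemma contract_gram [DecidableEq I] {b : I → I → ℂ} (hb : ONB b) (Ψ : I × IB → ℂ)
    (y y' : IB) :
    ∑ i, contract (b i) Ψ y * conj (contract (b i) Ψ y')
      = ∑ x, Ψ (x, y) * conj (Ψ (x, y')) := by
  classical
  set M : Matrix I I ℂ := Matrix.of fun i x => conj (b i x) with hM
  set P : Matrix I IB ℂ := Matrix.of fun x y => Ψ (x, y) with hP
  have hMM : Mᴴ * M = 1 := onb_complete hb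
  have hQ : (M * P)ᴴ * (M * P) = Pᴴ * P := by
    rw [Matrix.conjTranspose_mul, Matrix.mul_assoc, ← Matrix.mul_assoc Mᴴ M P, hMM,
      Matrix.one_mul]
  have h1 : ∀ i yy, contract (b i) Ψ yy = (M * P) i yy := by
    intro i yy
    simp [contract, Matrix.mul_apply, hM, hP]
  have hE : ((M * P)ᴴ * (M * P)) y' y = (Pᴴ * P) y' y := by rw [hQ]
  simp only [Matrix.mul_apply, Matrix.conjTranspose_apply, hP, Matrix.of_apply] at hE
  calc ∑ i, contract (b i) Ψ y * conj (contract (b i) Ψ y')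
      = ∑ i, conj ((M * P) i y') * (M * P) i y := by
        simp only [h1]; exact Finset.sum_congr rfl fun i _ => mul_comm _ _
    _ = ∑ x, conj (Ψ (x, y')) * Ψ (x, y) := hE
    _ = ∑ x, Ψ (x, y) * conj (Ψ (x, y')) :=
        Finset.sum_congr rfl fun x _ => mul_comm _ _

lemma sum_prob [DecidableEq I] {b : I → I → ℂ} (hb : ONB b) (Ψ : I × IB → ℂ) :
    ∑ i, prob (b i) Ψ = (braket Ψ Ψ).re := by
  classical
  have key : ∀ y, ∑ i, Complex.normSq (contract (b i) Ψ y)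
      = ∑ x, Complex.normSq (Ψ (x, y)) := by
    intro y
    have := congrArg Complex.re (contract_gram hb Ψ y y)
    simpa [Complex.re_sum, Complex.mul_conj] using this
  calc ∑ i, prob (b i) Ψ = ∑ i, ∑ y, Complex.normSq (contract (b i) Ψ y) := by
        simp only [prob_eq]
    _ = ∑ y, ∑ i, Complex.normSq (contract (b i) Ψ y) := Finset.sum_comm
    _ = ∑ y, ∑ x, Complex.normSq (Ψ (x, y)) := Finset.sum_congr rfl fun y _ => key y
    _ = (braket Ψ Ψ).re := by
        rw [braket_self_re, Fintype.sum_prod_type]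
        exact Finset.sum_comm

lemma purity_reduced_le_one {n : ℕ} (γ : Finset (Fin n)) (ψ : (Fin n → Fin 2) → ℂ)
    (hψ : (braket ψ ψ).re = 1) : purity (reduced γ ψ) ≤ 1 := by
  classical
  set m : ({i : Fin n // i ∈ γ} → Fin 2) → ({i : Fin n // i ∉ γ} → Fin 2) →
      (Fin n → Fin 2) := fun a c i => if h : i ∈ γ then a ⟨i, h⟩ else c ⟨i, h⟩ with hm
  set g : ({i : Fin n // i ∈ γ} → Fin 2) → ℝ :=
    fun a => ∑ c, Complex.normSq (ψ (m a c)) with hg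
  have hgsum : ∑ a, g a = 1 := by
    rw [← hψ, braket_self_re]
    rw [← Equiv.sum_comp (Equiv.piEquivPiSubtypeProd (· ∈ γ) fun _ => Fin 2).symm
      (fun y => Complex.normSq (ψ y)), Fintype.sum_prod_type]
    rfl
  have hbound : ∀ a b, Complex.normSq (reduced γ ψ a b) ≤ g a * g b := by
    intro a b
    have h1 : ‖reduced γ ψ a b‖
        ≤ ∑ c, ‖ψ (m a c)‖ * ‖ψ (m b c)‖ := by
      refine (norm_sum_le _ _).trans (le_of_eq ?_)
      refine Finset.sum_congr rfl fun c _ => ?_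
      rw [norm_mul, Complex.norm_conj]
    have h2 : (∑ c, ‖ψ (m a c)‖ * ‖ψ (m b c)‖) ^ 2
        ≤ g a * g b := by
      refine (Finset.sum_mul_sq_le_sq_mul_sq _ _ _).trans (le_of_eq ?_)
      rw [hg]
      congr 1 <;> exact Finset.sum_congr rfl fun c _ => (Complex.sq_norm _)
    calc Complex.normSq (reduced γ ψ a b) = ‖reduced γ ψ a b‖ ^ 2 :=
          (Complex.sq_norm _).symm
      _ ≤ (∑ c, ‖ψ (m a c)‖ * ‖ψ (m b c)‖) ^ 2 :=
          pow_le_pow_left₀ (norm_nonneg _) h1 2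
      _ ≤ g a * g b := h2
  calc purity (reduced γ ψ) = ∑ a, ∑ b, Complex.normSq (reduced γ ψ a b) :=
        purity_reduced γ ψ
    _ ≤ ∑ a, ∑ b, g a * g b :=
        Finset.sum_le_sum fun a _ => Finset.sum_le_sum fun b _ => hbound a b
    _ = (∑ a, g a) * (∑ b, g b) := by rw [Finset.sum_mul]
        <;> exact (Finset.sum_congr rfl fun a _ => (Finset.mul_sum _ _ _).symm)
    _ = 1 := by rw [hgsum]; ring

lemma purity_reduced_smul {n : ℕ} (γ : Finset (Fin n)) (ψ : (Fin n → Fin 2) → ℂ) (s : ℝ) :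
    purity (reduced γ (fun y => (s : ℂ) * ψ y)) = (s ^ 2) ^ 2 * purity (reduced γ ψ) := by
  have he : ∀ a b, reduced γ (fun y => (s : ℂ) * ψ y) a b
      = ((s ^ 2 : ℝ) : ℂ) * reduced γ ψ a b := by
    intro a b
    simp only [reduced, Matrix.of_apply, Finset.mul_sum]
    refine Finset.sum_congr rfl fun c _ => ?_
    rw [_root_.map_mul, Complex.conj_ofReal]
    push_cast
    ring
  rw [purity_reduced, purity_reduced, Finset.mul_sum]
  refine Finset.sum_congr rfl fun a _ => ?_
  rw [Finset.mul_sum]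
  refine Finset.sum_congr rfl fun b _ => ?_
  rw [he, Complex.normSq_mul, Complex.normSq_ofReal]
  ring

lemma productBasis_onb {K : Type*} [Fintype K] [DecidableEq K]
    {q : K → Fin 2 → Fin 2 → ℂ} (hq : ∀ k, ONB (q k)) : ONB (productBasis q) := by
  intro i j
  unfold braket productBasis
  have h1 : ∀ x : K → Fin 2, conj (∏ k, q k (i k) (x k)) * ∏ k, q k (j k) (x k)
      = ∏ k, (conj (q k (i k) (x k)) * q k (j k) (x k)) := by
    intro x
    rw [map_prod, ← Finset.prod_mul_distrib]
  simp_rw [h1]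
  rw [← Fintype.piFinset_univ, ← Finset.prod_univ_sum (fun _ => Finset.univ)
    (fun k v => conj (q k (i k) v) * q k (j k) v)]
  have h2 : ∀ k, (∑ v, conj (q k (i k) v) * q k (j k) v)
      = if i k = j k then (1 : ℂ) else 0 := fun k => hq k (i k) (j k)
  simp_rw [h2]
  by_cases h : i = j
  · subst h; simp
  · rw [if_neg h]
    obtain ⟨k, hk⟩ := Function.ne_iff.mp h
    exact Finset.prod_eq_zero (Finset.mem_univ k) (if_neg hk)

lemma std_onb [DecidableEq I] : ONB (fun (i x : I) => if i = x then (1 : ℂ) else 0) := by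
  intro i j
  simp only [braket, apply_ite (starRingEnd ℂ), _root_.map_one, map_zero, ite_mul, one_mul,
    zero_mul, mul_ite, mul_one, mul_zero]
  rw [Finset.sum_ite_eq]
  simp [eq_comm]

end Aux
section Core

open scoped Matrix

lemma avgE_le_min {I : Type*} [Fintype I] [DecidableEq I] {NB : ℕ}
    (γ : Finset (Fin NB)) (h1 : γ ≠ ∅) (h2 : γ ≠ Finset.univ)
    (Ψ : I × (Fin NB → Fin 2) → ℂ) (hΨ : braket Ψ Ψ = 1)
    {b : I → I → ℂ} (hb : ONB b) :
    avgE gme b Ψ ≤ Real.sqrt (2 * (1 - purity (reducedB γ Ψ))) := by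
  classical
  set c : I → (Fin NB → Fin 2) → ℂ := fun i => contract (b i) Ψ with hc
  set p : I → ℝ := fun i => prob (b i) Ψ with hpdef
  set φ : I → (Fin NB → Fin 2) → ℂ := fun i => postState (b i) Ψ with hφdef
  have hp0 : ∀ i, 0 ≤ p i := fun i => prob_nonneg _ _
  have hcz : ∀ i, p i = 0 → ∀ y, c i y = 0 := fun i hpi y => contract_eq_zero hpi y
  have hpsum : ∑ i, p i = 1 := by
    rw [hpdef]
    simp only
    rw [sum_prob hb, hΨ]
    simp
  have hφs : ∀ i, φ i = fun y => ((((Real.sqrt (p i))⁻¹ : ℝ)) : ℂ) * c i y := by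
    intro i
    funext y
    simp [hφdef, postState, hc, hpdef, Complex.ofReal_inv]
  -- normalization of post-measurement states
  have hφnorm : ∀ i, p i ≠ 0 → (braket (φ i) (φ i)).re = 1 := by
    intro i hpi
    rw [hφs i, braket_self_re]
    have : ∀ y, Complex.normSq ((((Real.sqrt (p i))⁻¹ : ℝ) : ℂ) * c i y)
        = (p i)⁻¹ * Complex.normSq (c i y) := by
      intro y
      rw [Complex.normSq_mul, Complex.normSq_ofReal]
      congr 1
      rw [← Real.sqrt_inv]
      exact Real.mul_self_sqrt (inv_nonneg.mpr (hp0 i))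
    simp_rw [this]
    rw [← Finset.mul_sum, ← prob_eq]
    field_simp [hpdef]
    rfl
  -- purity of post-measurement reduced states vs unnormalized ones
  have hscale : ∀ i, purity (reduced γ (φ i))
      = (((Real.sqrt (p i))⁻¹ ^ 2) ^ 2) * purity (reduced γ (c i)) := by
    intro i
    rw [hφs i]
    exact purity_reduced_smul γ (c i) _
  have hple : ∀ i, p i ≠ 0 → purity (reduced γ (φ i)) ≤ 1 := fun i hpi =>
    purity_reduced_le_one γ (φ i) (hφnorm i hpi)
  have hφ0 : ∀ i, p i = 0 → purity (reduced γ (φ i)) = 0 := by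
    intro i hpi
    rw [hscale i]
    have : ∀ a b', reduced γ (c i) a b' = 0 := by
      intro a b'
      simp only [reduced, Matrix.of_apply]
      refine Finset.sum_eq_zero fun cc _ => ?_
      rw [hcz i hpi, zero_mul]
    rw [purity_reduced]
    simp [this]
  -- decomposition of the reduced state of Ψ
  have hsum : reducedB γ Ψ = ∑ i, reduced γ (c i) := by
    ext a b'
    simp only [reducedB, Matrix.of_apply, Matrix.sum_apply, reduced]
    rw [Finset.sum_comm]
    conv_rhs => rw [Finset.sum_comm]
    refine Finset.sum_congr rfl fun cc _ => ?_
    exact (contract_gram hb Ψ _ _).symm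
  -- core convexity estimate
  have hcore : purity (reducedB γ Ψ) ≤ ∑ i, p i * purity (reduced γ (φ i)) := by
    set E := EuclideanSpace ℂ (({i : Fin NB // i ∈ γ} → Fin 2) ×
      ({i : Fin NB // i ∈ γ} → Fin 2)) with hE
    set v : I → E := fun i => WithLp.toLp 2 fun z => reduced γ (c i) z.1 z.2 with hv
    have hvnorm : ∀ i, ‖v i‖ ^ 2 = purity (reduced γ (c i)) := by
      intro i
      rw [EuclideanSpace.norm_eq, Real.sq_sqrt (Finset.sum_nonneg fun z _ => sq_nonneg _),
        purity_reduced, Fintype.sum_prod_type]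
      refine Finset.sum_congr rfl fun a _ => Finset.sum_congr rfl fun b' _ => ?_
      exact Complex.sq_norm _
    have hvsum : purity (reducedB γ Ψ) = ‖∑ i, v i‖ ^ 2 := by
      have hconj : ∀ a b', (reducedB γ Ψ) b' a = conj ((reducedB γ Ψ) a b') := by
        intro a b'
        rw [hsum]
        simp only [Matrix.sum_apply, map_sum]
        exact Finset.sum_congr rfl fun i _ => reduced_conj γ (c i) a b'
      rw [purity_of_conj _ hconj, EuclideanSpace.norm_eq,
        Real.sq_sqrt (Finset.sum_nonneg fun z _ => sq_nonneg _), Fintype.sum_prod_type]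
      refine Finset.sum_congr rfl fun a _ => Finset.sum_congr rfl fun b' _ => ?_
      have hza : (∑ i, v i) (a, b') = (reducedB γ Ψ) a b' := by
        rw [hsum, Matrix.sum_apply]
        rw [WithLp.ofLp_sum, Finset.sum_apply]
      rw [hza, ← Complex.sq_norm]
    set h : I → ℝ := fun i => if p i = 0 then 0 else ‖v i‖ / Real.sqrt (p i) with hh
    have hv0 : ∀ i, p i = 0 → v i = 0 := by
      intro i hpi
      rw [WithLp.ext_iff]
      funext z
      simp only [hv, WithLp.ofLp_toLp, WithLp.ofLp_zero, Pi.zero_apply]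
      simp only [reduced, Matrix.of_apply]
      refine Finset.sum_eq_zero fun cc _ => ?_
      rw [hcz i hpi, zero_mul]
    have hsh : ∀ i, Real.sqrt (p i) * h i = ‖v i‖ := by
      intro i
      by_cases hpi : p i = 0
      · rw [hh]
        simp only [if_pos hpi, mul_zero, hv0 i hpi, norm_zero]
      · rw [hh]
        simp only [if_neg hpi]
        rw [mul_div_cancel₀]
        exact Real.sqrt_ne_zero'.mpr (lt_of_le_of_ne (hp0 i) (Ne.symm hpi))
    have hh2 : ∀ i, h i ^ 2 = p i * purity (reduced γ (φ i)) := by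
      intro i
      by_cases hpi : p i = 0
      · rw [hh]
        simp [if_pos hpi, hpi]
      · have hppos : 0 < p i := lt_of_le_of_ne (hp0 i) (Ne.symm hpi)
        rw [hh]
        simp only [if_neg hpi]
        rw [div_pow, Real.sq_sqrt (hp0 i), hvnorm i, hscale i]
        rw [← Real.sqrt_inv, Real.sq_sqrt (inv_nonneg.mpr (hp0 i))]
        field_simp
    calc purity (reducedB γ Ψ) = ‖∑ i, v i‖ ^ 2 := hvsum
      _ ≤ (∑ i, ‖v i‖) ^ 2 := by
          refine pow_le_pow_left₀ (norm_nonneg _) ?_ 2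
          exact norm_sum_le _ _
      _ = (∑ i, Real.sqrt (p i) * h i) ^ 2 := by
          rw [Finset.sum_congr rfl fun i _ => (hsh i).symm]
      _ ≤ (∑ i, Real.sqrt (p i) ^ 2) * ∑ i, h i ^ 2 :=
          Finset.sum_mul_sq_le_sq_mul_sq _ _ _
      _ = ∑ i, p i * purity (reduced γ (φ i)) := by
          rw [Finset.sum_congr rfl fun i _ => Real.sq_sqrt (hp0 i), hpsum, one_mul]
          exact Finset.sum_congr rfl fun i _ => hh2 i
  -- assemble
  set x : I → ℝ := fun i => 2 * (1 - purity (reduced γ (φ i))) with hx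
  have hpx : ∀ i, 0 ≤ p i * x i := by
    intro i
    by_cases hpi : p i = 0
    · rw [hpi, zero_mul]
    · have := hple i hpi
      have hppos : 0 < p i := lt_of_le_of_ne (hp0 i) (Ne.symm hpi)
      have : 0 ≤ x i := by rw [hx]; simp only; nlinarith
      exact mul_nonneg (hp0 i) this
  have step1 : avgE gme b Ψ ≤ ∑ i, p i * Real.sqrt (x i) := by
    unfold avgE
    refine Finset.sum_le_sum fun i _ => ?_
    exact mul_le_mul_of_nonneg_left (gme_le_sqrt h1 h2 _) (hp0 i)
  have step2 : ∑ i, p i * Real.sqrt (x i) ≤ Real.sqrt (∑ i, p i * x i) := by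
    have hnn : 0 ≤ ∑ i, p i * Real.sqrt (x i) :=
      Finset.sum_nonneg fun i _ => mul_nonneg (hp0 i) (Real.sqrt_nonneg _)
    rw [show (∑ i, p i * Real.sqrt (x i)) = ∑ i, Real.sqrt (p i) * Real.sqrt (p i * x i)
      from Finset.sum_congr rfl fun i _ => by
        rw [Real.sqrt_mul (hp0 i), ← mul_assoc, Real.mul_self_sqrt (hp0 i)]]
    rw [← Real.sqrt_sq (Finset.sum_nonneg fun i _ =>
      mul_nonneg (Real.sqrt_nonneg _) (Real.sqrt_nonneg _))]
    refine Real.sqrt_le_sqrt ?_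
    refine (Finset.sum_mul_sq_le_sq_mul_sq _ _ _).trans (le_of_eq ?_)
    rw [Finset.sum_congr rfl fun i _ => Real.sq_sqrt (hp0 i), hpsum, one_mul]
    exact Finset.sum_congr rfl fun i _ => Real.sq_sqrt (hpx i)
  have step3 : ∑ i, p i * x i ≤ 2 * (1 - purity (reducedB γ Ψ)) := by
    have : ∑ i, p i * x i = 2 * (1 - ∑ i, p i * purity (reduced γ (φ i))) := by
      rw [hx]
      simp only
      rw [show (∑ i, p i * (2 * (1 - purity (reduced γ (φ i)))))
          = ∑ i, (2 * p i - 2 * (p i * purity (reduced γ (φ i))))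
        from Finset.sum_congr rfl fun i _ => by ring]
      rw [Finset.sum_sub_distrib, ← Finset.mul_sum, ← Finset.mul_sum, hpsum]
      ring
    rw [this]
    nlinarith [hcore]
  calc avgE gme b Ψ ≤ ∑ i, p i * Real.sqrt (x i) := step1
    _ ≤ Real.sqrt (∑ i, p i * x i) := step2
    _ ≤ Real.sqrt (2 * (1 - purity (reducedB γ Ψ))) := Real.sqrt_le_sqrt step3

end Core
/-- For a unit vector `Ψ` in `(ℂ²)^{⊗N_A} ⊗ (ℂ²)^{⊗N_B}` with `N_B ≥ 2`,
the localizable multipartite entanglement and multipartite entanglement of assistance with the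
GME-concurrence as seed measure satisfy `L^C(Ψ) ≤ L^C_global(Ψ) ≤
min_{∅ ⊊ γ ⊊ B} √(2(1 − tr Ψ_γ²))`. -/
theorem gme_localizable_le_assistance_le_min_purity
    (NA NB : ℕ) (hNA : 0 < NA) (hNB : 2 ≤ NB)
    (Ψ : (Fin NA → Fin 2) × (Fin NB → Fin 2) → ℂ) (hΨ : braket Ψ Ψ = 1) :
    Lloc gme Ψ ≤ Lglobal gme Ψ ∧
    ∀ γ : Finset (Fin NB), γ ≠ ∅ → γ ≠ Finset.univ →
      Lglobal gme Ψ ≤ Real.sqrt (2 * (1 - purity (reducedB γ Ψ))) := by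
  classical
  constructor
  · unfold Lloc Lglobal
    apply csSup_le_csSup
    · refine ⟨Real.sqrt 2, ?_⟩
      rintro r ⟨b, hb, rfl⟩
      calc avgE gme b Ψ ≤ ∑ i, prob (b i) Ψ * Real.sqrt 2 := by
            unfold avgE
            refine Finset.sum_le_sum fun i _ => ?_
            exact mul_le_mul_of_nonneg_left (gme_le_sqrt_two hNB _) (prob_nonneg _ _)
        _ = Real.sqrt 2 := by rw [← Finset.sum_mul, sum_prob hb, hΨ]; simp
    · exact ⟨_, ⟨fun _ => fun i x => if i = x then (1 : ℂ) else 0,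
        fun _ => std_onb, rfl⟩⟩
    · rintro r ⟨q, hq, rfl⟩
      exact ⟨productBasis q, productBasis_onb hq, rfl⟩
  · intro γ hγ1 hγ2
    unfold Lglobal
    apply Real.sSup_le
    · rintro r ⟨b, hb, rfl⟩
      exact avgE_le_min γ hγ1 hγ2 Ψ hΨ hb
    · exact Real.sqrt_nonneg _

end QIpaper
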